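/- Let L be a finite lattice and let (a,b) be a decoration site of L whose lower corner a has at least three upper covers. If t, u, v are three distinct upper covers of a, then the pairwise joins satisfy t ⊔ u = t ⊔ v = u ⊔ v = b and the pairwise meets satisfy t ⊓ u = t ⊓ v = u ⊓ v = a (so {a, t, u, v, b} is a diamond sublattice isomorphic to M₃); consequently L is not distributive. -/
import Mathlib


/-- An element of a finite lattice is *doubly irreducible* if it has exactly one
upper cover and exactly one lower cover. -/
def DoublyIrreducible {α : Type*} [Lattice α] (x : α) : Prop :=
  (∃! u, x ⋖ u) ∧ (∃! l, l ⋖ x)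

/-- A *decoration site* of a lattice is a pair `(a, b)` such that the set of upper
covers of `a` equals the set of lower covers of `b`, and `a` has at least two
upper covers. -/
def DecorationSite {α : Type*} [Lattice α] (a b : α) : Prop :=
  {x | a ⋖ x} = {x | x ⋖ b} ∧ 2 ≤ {x | a ⋖ x}.ncard

/-- The doubly irreducible elements strictly between `a` and `b`. -/
def siteTrinkets {α : Type*} [Lattice α] (a b : α) : Set α :=
  {x | DoublyIrreducible x ∧ a < x ∧ x < b}

/-- A *trinket-removal set* of a lattice: for every decoration site `(a, b)` it
contains exactly `min d (k - 2)` doubly irreducible elements strictly between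
`a` and `b` (where `d` is the number of doubly irreducible elements strictly
between `a` and `b`, and `k` is the number of upper covers of `a`), and it
contains no other elements. -/
def TrinketRemovalSet {α : Type*} [Lattice α] (T : Set α) : Prop :=
  (∀ a b : α, DecorationSite a b →
      (T ∩ siteTrinkets a b).ncard =
        min (siteTrinkets a b).ncard ({x | a ⋖ x}.ncard - 2)) ∧
  ∀ t ∈ T, ∃ a b : α, DecorationSite a b ∧ t ∈ siteTrinkets a b

/-- A finite lattice is a *rack* if `min d (k - 2) = 0` for every decoration site. -/
def IsRack (α : Type*) [Lattice α] : Prop :=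
  ∀ a b : α, DecorationSite a b →
    min (siteTrinkets a b).ncard ({x | a ⋖ x}.ncard - 2) = 0

/-- A *knot* of a finite lattice is an element distinct from top and bottom that
is comparable with every element. -/
def IsKnot {α : Type*} [Lattice α] (x : α) : Prop :=
  (∃ y, x < y) ∧ (∃ y, y < x) ∧ ∀ y, x ≤ y ∨ y ≤ x

/-- Birkhoff's semimodularity condition: whenever distinct `x` and `y` both
cover a common element `a`, the join `x ⊔ y` covers both `x` and `y`. -/
def Semimodular (α : Type*) [Lattice α] : Prop :=
  ∀ a x y : α, x ≠ y → a ⋖ x → a ⋖ y → x ⋖ x ⊔ y ∧ y ⋖ x ⊔ y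

/-- The modular law: for all `x ≤ z`, `x ⊔ (y ⊓ z) = (x ⊔ y) ⊓ z`. -/
def ModularLaw (α : Type*) [Lattice α] : Prop :=
  ∀ x y z : α, x ≤ z → x ⊔ (y ⊓ z) = (x ⊔ y) ⊓ z

/-- If the lower corner of a decoration site has at least three upper covers
`t`, `u`, `v`, then `{a, t, u, v, b}` is a diamond: all pairwise joins equal `b`
and all pairwise meets equal `a`; consequently the lattice is not distributive. -/
theorem stmt_14 {α : Type*} [Lattice α] [Finite α] [Nonempty α] {a b t u v : α}
    (hab : DecorationSite a b) (hk : 3 ≤ {x | a ⋖ x}.ncard)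
    (ht : a ⋖ t) (hu : a ⋖ u) (hv : a ⋖ v)
    (htu : t ≠ u) (htv : t ≠ v) (huv : u ≠ v) :
    (t ⊔ u = b ∧ t ⊔ v = b ∧ u ⊔ v = b) ∧
    (t ⊓ u = a ∧ t ⊓ v = a ∧ u ⊓ v = a) ∧
    ¬ (∀ x y z : α, x ⊓ (y ⊔ z) = (x ⊓ y) ⊔ (x ⊓ z))     := by
  obtain ⟨hset, -⟩ := hab
  have hb : ∀ x : α, a ⋖ x → x ⋖ b := fun x hx => (Set.ext_iff.mp hset x).mp hx
  have join : ∀ x y : α, x ≠ y → a ⋖ x → a ⋖ y → x ⊔ y = b := by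
    intro x y hxy hx hy
    have hxb := hb x hx
    have hyb := hb y hy
    have hylex : ¬ y ≤ x := by
      intro hle
      rcases lt_or_eq_of_le hle with h | h
      · exact hx.2 hy.1 h
      · exact hxy h.symm
    have hlt : x < x ⊔ y := left_lt_sup.mpr hylex
    have hle : x ⊔ y ≤ b := sup_le hxb.le hyb.le
    rcases lt_or_eq_of_le hle with h | h
    · exact absurd h (hxb.2 hlt)
    · exact h
  have meet : ∀ x y : α, x ≠ y → a ⋖ x → a ⋖ y → x ⊓ y = a := by
    intro x y hxy hx hy
    have hylex : ¬ x ≤ y := by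
      intro hle
      rcases lt_or_eq_of_le hle with h | h
      · exact hy.2 hx.1 h
      · exact hxy h
    have hlt : x ⊓ y < x := inf_lt_left.mpr hylex
    have hge : a ≤ x ⊓ y := le_inf hx.le hy.le
    rcases lt_or_eq_of_le hge with h | h
    · exact absurd hlt (hx.2 h)
    · exact h.symm
  refine ⟨⟨join t u htu ht hu, join t v htv ht hv, join u v huv hu hv⟩,
    ⟨meet t u htu ht hu, meet t v htv ht hv, meet u v huv hu hv⟩, ?_⟩
  intro hdist
  have := hdist t u v
  rw [join u v huv hu hv, meet t u htu ht hu, meet t v htv ht hv,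
    inf_eq_left.mpr (hb t ht).le, sup_idem] at this
  exact ht.lt.ne' this
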